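/- In coordinates (R, θ, φ) obtained from Boyer–Lindquist r via r = R[(1 + m/(2R))² − a²/(4R²)], the stationary Kerr space metric ĝ = (p²/Δ) dr² + p² dθ² + (p²Δ/(p² − 2mr)) sin²θ dφ², with p² = r² + a² cos²θ, equals σ(g̃ + s⊗s), where g̃ = dR² + R² dθ² + R² sin²θ dφ² is flat, σ = p²/R², and s = (a R sin²θ/√(p² − 2mr)) dφ; equivalently ĝ = σ g̃ + s'⊗s' with s' = (a p sin²θ/√(p² − 2mr)) dφ. -/

import Mathlib

set_option maxHeartbeats 1000000 in
/-- In coordinates `(R, θ, φ)` obtained from Boyer–Lindquist `r`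
via `r = R[(1 + m/(2R))² − a²/(4R²)]` (i.e. `R = (√Δ + r − m)/2`, with
`dr/dR = √Δ/R`), the stationary Kerr space metric
`ĝ = (p²/Δ) dr² + p² dθ² + (p²Δ/(p² − 2mr)) sin²θ dφ²`, `p² = r² + a²cos²θ`,
equals `σ (g̃ + s⊗s)` where `g̃ = dR² + R² dθ² + R² sin²θ dφ²` is flat,
`σ = p²/R²` and `s = (a R sin²θ/√(p² − 2mr)) dφ`; equivalently
`ĝ = σ g̃ + s'⊗s'` with `s' = (a p sin²θ/√(p² − 2mr)) dφ`. -/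
theorem stmt12 (m a : ℝ) (hm : 0 < m) :
    ∀ r θ Δ p2 : ℝ, m < r →
      Δ = r ^ 2 - 2 * m * r + a ^ 2 → 0 < Δ →
      p2 = r ^ 2 + a ^ 2 * Real.cos θ ^ 2 → 0 < p2 - 2 * m * r →
      ∀ R : ℝ, R = (Real.sqrt Δ + r - m) / 2 →
      r = R * ((1 + m / (2 * R)) ^ 2 - a ^ 2 / (4 * R ^ 2)) ∧
      HasDerivAt (fun R' : ℝ => R' + m + (m ^ 2 - a ^ 2) / (4 * R'))
        (Real.sqrt Δ / R) R ∧
      ∀ ghat gflat : Matrix (Fin 3) (Fin 3) ℝ, ∀ σ : ℝ, ∀ s s' : Fin 3 → ℝ,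
        ghat = Matrix.diagonal ![p2 / Δ * (Real.sqrt Δ / R) ^ 2, p2,
          p2 * Δ * Real.sin θ ^ 2 / (p2 - 2 * m * r)] →
        gflat = Matrix.diagonal ![1, R ^ 2, R ^ 2 * Real.sin θ ^ 2] →
        σ = p2 / R ^ 2 →
        s = ![0, 0, a * R * Real.sin θ ^ 2 / Real.sqrt (p2 - 2 * m * r)] →
        s' = ![0, 0, a * Real.sqrt p2 * Real.sin θ ^ 2 /
          Real.sqrt (p2 - 2 * m * r)] →
        ghat = σ • (gflat + Matrix.vecMulVec s s) ∧
          ghat = σ • gflat + Matrix.vecMulVec s' s' := by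
  intro r θ Δ p2 hmr hΔ hΔ0 hp2 hq0 R hR
  have hsΔ : Real.sqrt Δ ^ 2 = Δ := Real.sq_sqrt hΔ0.le
  have hsΔpos : 0 < Real.sqrt Δ := Real.sqrt_pos.mpr hΔ0
  have hR0 : 0 < R := by rw [hR]; linarith
  have hsq : Real.sqrt Δ = 2 * R - r + m := by rw [hR]; ring
  have hr : r = R + m + (m ^ 2 - a ^ 2) / (4 * R) := by
    have h : Δ = (2 * R - r + m) ^ 2 := by rw [← hsq, hsΔ]
    field_simp
    nlinarith [h, hΔ]
  have hqq : Real.sqrt (p2 - 2 * m * r) * Real.sqrt (p2 - 2 * m * r)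
      = p2 - 2 * m * r := Real.mul_self_sqrt hq0.le
  have hqne : Real.sqrt (p2 - 2 * m * r) ≠ 0 :=
    (Real.sqrt_pos.mpr hq0).ne'
  have hp2pos : 0 < p2 := by nlinarith
  have hpp : Real.sqrt p2 * Real.sqrt p2 = p2 := Real.mul_self_sqrt hp2pos.le
  refine ⟨by rw [hr]; field_simp; ring, ?_, ?_⟩
  · have hfe : (fun R' : ℝ => R' + m + (m ^ 2 - a ^ 2) / (4 * R'))
        = fun R' : ℝ => R' + m + (m ^ 2 - a ^ 2) / 4 * R'⁻¹ := by
      funext x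
      rw [div_eq_mul_inv, div_eq_mul_inv, mul_inv]
      ring
    rw [hfe]
    have h1 := ((hasDerivAt_id R).add_const m).add
      ((hasDerivAt_inv hR0.ne').const_mul ((m ^ 2 - a ^ 2) / 4))
    refine h1.congr_deriv ?_
    rw [hsq, hr]
    field_simp
    ring
  · intro ghat gflat σ s s' hg hgf hσ hs hs'
    have hΔ' : Δ = p2 - 2 * m * r + a ^ 2 * Real.sin θ ^ 2 := by
      rw [hΔ, hp2]
      nlinarith [Real.sin_sq_add_cos_sq θ]
    have key1 : p2 / Δ * (Real.sqrt Δ ^ 2 / R ^ 2) = p2 / R ^ 2 := by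
      rw [hsΔ]; field_simp
    have key2 : p2 * Δ * Real.sin θ ^ 2 / (p2 - 2 * m * r)
        = p2 / R ^ 2 * (R ^ 2 * Real.sin θ ^ 2 +
            a * R * Real.sin θ ^ 2 / Real.sqrt (p2 - 2 * m * r) *
            (a * R * Real.sin θ ^ 2 / Real.sqrt (p2 - 2 * m * r))) := by
      rw [div_mul_div_comm, hqq, hΔ']
      field_simp
    have key3 : p2 * Δ * Real.sin θ ^ 2 / (p2 - 2 * m * r)
        = p2 / R ^ 2 * (R ^ 2 * Real.sin θ ^ 2) +
            a * Real.sqrt p2 * Real.sin θ ^ 2 / Real.sqrt (p2 - 2 * m * r) *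
            (a * Real.sqrt p2 * Real.sin θ ^ 2 / Real.sqrt (p2 - 2 * m * r)) := by
      rw [div_mul_div_comm, hqq, hΔ',
        show a * Real.sqrt p2 * Real.sin θ ^ 2 * (a * Real.sqrt p2 * Real.sin θ ^ 2)
          = a ^ 2 * (Real.sqrt p2 * Real.sqrt p2) * Real.sin θ ^ 4 by ring, hpp]
      field_simp
    have key1' : p2 = p2 / R ^ 2 * R ^ 2 := by field_simp
    subst hg hgf hσ hs hs'
    constructor <;>
    · funext i j
      fin_cases i <;> fin_cases j <;>
        simp [Matrix.diagonal, Matrix.vecMulVec_apply, Matrix.add_apply,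
          Matrix.smul_apply, smul_eq_mul, div_pow] <;>
        linarith [key1, key1', key2, key3]
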